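/- (Equivalence of gap relation and tanh identity) Let β > 0, μ ∈ ℝ, p ∈ ℝ³ with p² ≠ μ, and let γ ∈ (0,1), α̂ ∈ ℂ with (γ−1/2)² + |α̂|² < 1/4 and (1−2γ)/(p²−μ) > 0. Define Δ = −(p²−μ)·α̂/(γ−1/2) and E = √((p²−μ)² + |Δ|²). Then the equation p²−μ = −((2γ−1)/β) f(2√((γ−1/2)² + |α̂|²)) (with f(a) = (1/a)ln((1+a)/(1−a))) holds if and only if tanh(βE/2) = ((1−2γ)/(p²−μ))·E. -/

import Mathlib

open Real

/-- `f(a) = (1/a)·ln((1+a)/(1−a))` for `a ∈ (0,1)`, with `f(0) = 2`. -/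
noncomputable def fBCS (a : ℝ) : ℝ :=
  if a = 0 then 2 else (1 / a) * Real.log ((1 + a) / (1 - a))

lemma tanh_eq_iff_log (x c : ℝ) (h1 : -1 < c) (h2 : c < 1) :
    Real.tanh x = c ↔ 2 * x = Real.log ((1 + c) / (1 - c)) := by
  have hc1 : (0:ℝ) < 1 - c := by linarith
  have hc2 : (0:ℝ) < 1 + c := by linarith
  have hv : (0:ℝ) < (1 + c) / (1 - c) := div_pos hc2 hc1
  have hex : (0:ℝ) < Real.exp (2 * x) := Real.exp_pos _
  have htanh : Real.tanh x = (Real.exp (2 * x) - 1) / (Real.exp (2 * x) + 1) := by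
    rw [Real.tanh_eq_sinh_div_cosh, Real.sinh_eq, Real.cosh_eq, Real.exp_neg,
      show (2:ℝ) * x = x + x by ring, Real.exp_add]
    have h0 := Real.exp_ne_zero x
    have h1' : Real.exp x * Real.exp x + 1 ≠ 0 := by positivity
    field_simp
  have step1 : Real.tanh x = c ↔ Real.exp (2 * x) = (1 + c) / (1 - c) := by
    rw [htanh, div_eq_iff (by positivity), eq_div_iff (ne_of_gt hc1)]
    constructor <;> intro h <;> nlinarith [h]
  rw [step1]
  constructor
  · intro h; rw [← Real.log_exp (2 * x), h]
  · intro h; rw [h, Real.exp_log hv]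

/-- Equivalence between the Euler–Lagrange equation for `γ` and the tanh identity. -/
theorem gap_relation_iff_tanh (β μ : ℝ) (hβ : 0 < β)
    (p : EuclideanSpace ℝ (Fin 3)) (hp : ‖p‖ ^ 2 ≠ μ)
    (γ : ℝ) (hγ0 : 0 < γ) (hγ1 : γ < 1) (αh : ℂ)
    (hin : (γ - 1 / 2) ^ 2 + ‖αh‖ ^ 2 < 1 / 4)
    (hsign : 0 < (1 - 2 * γ) / (‖p‖ ^ 2 - μ)) :
    (‖p‖ ^ 2 - μ =
        -((2 * γ - 1) / β) * fBCS (2 * Real.sqrt ((γ - 1 / 2) ^ 2 + ‖αh‖ ^ 2))) ↔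
      Real.tanh (β * Real.sqrt ((‖p‖ ^ 2 - μ) ^ 2 +
          ‖-(((‖p‖ ^ 2 - μ) / (γ - 1 / 2) : ℝ) : ℂ) * αh‖ ^ 2) / 2) =
        ((1 - 2 * γ) / (‖p‖ ^ 2 - μ)) *
          Real.sqrt ((‖p‖ ^ 2 - μ) ^ 2 +
            ‖-(((‖p‖ ^ 2 - μ) / (γ - 1 / 2) : ℝ) : ℂ) * αh‖ ^ 2) := by
  have ht : ‖p‖ ^ 2 - μ ≠ 0 := sub_ne_zero.mpr hp
  set t := ‖p‖ ^ 2 - μ with htdef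
  set g := γ - 1 / 2 with hgdef
  -- sign facts
  have hsign' : 0 < (-2 * g) / t := by
    rw [show (-2 : ℝ) * g = 1 - 2 * γ by rw [hgdef]; ring]; exact hsign
  have hgt : g / t < 0 := by
    have h : (-2 : ℝ) * g / t = -2 * (g / t) := by ring
    rw [h] at hsign'; linarith
  have hg : g ≠ 0 := by
    intro h; rw [h] at hgt; simp at hgt
  -- r
  set r := Real.sqrt (g ^ 2 + ‖αh‖ ^ 2) with hrdef
  have hr0 : 0 < r := Real.sqrt_pos.mpr (by positivity)
  have hr2 : r ^ 2 = g ^ 2 + ‖αh‖ ^ 2 := Real.sq_sqrt (by positivity)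
  have hrhalf : r < 1 / 2 := by
    rw [hrdef, show (1:ℝ)/2 = Real.sqrt (1/4) by
      rw [show (1:ℝ)/4 = (1/2)^2 by norm_num, Real.sqrt_sq (by norm_num)]]
    exact Real.sqrt_lt_sqrt (by positivity) hin
  have h2r : 2 * r < 1 := by linarith
  -- norm computation
  have hnorm : ‖-((t / g : ℝ) : ℂ) * αh‖ ^ 2 = (t / g) ^ 2 * ‖αh‖ ^ 2 := by
    rw [norm_mul, norm_neg, Complex.norm_real, Real.norm_eq_abs, mul_pow, sq_abs]
  have htg : t / g < 0 := by
    rcases div_neg_iff.mp hgt with ⟨h1, h2⟩ | ⟨h1, h2⟩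
    · exact div_neg_of_neg_of_pos h2 h1
    · exact div_neg_of_pos_of_neg h2 h1
  -- E
  have hE : Real.sqrt (t ^ 2 + ‖-((t / g : ℝ) : ℂ) * αh‖ ^ 2) = (-(t / g)) * r := by
    rw [hnorm, show t ^ 2 + (t / g) ^ 2 * ‖αh‖ ^ 2 = (-(t / g)) ^ 2 * (g ^ 2 + ‖αh‖ ^ 2) by
      field_simp]
    rw [Real.sqrt_mul (sq_nonneg _), Real.sqrt_sq (by linarith : (0:ℝ) ≤ -(t / g))]
  rw [hE]
  -- RHS coefficient
  have hcoef : (1 - 2 * γ) / t * ((-(t / g)) * r) = 2 * r := by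
    rw [show (1 - 2 * γ) = -2 * g by rw [hgdef]; ring]
    field_simp
  rw [hcoef]
  -- fBCS value
  have hf : fBCS (2 * r) = (1 / (2 * r)) * Real.log ((1 + 2 * r) / (1 - 2 * r)) := by
    rw [fBCS, if_neg (by positivity)]
  rw [hf]
  rw [tanh_eq_iff_log _ _ (by linarith) h2r]
  constructor
  · intro h
    have hL : Real.log ((1 + 2 * r) / (1 - 2 * r)) = β * (-(t / g)) * r := by
      have hβ' : β ≠ 0 := ne_of_gt hβ
      field_simp at h
      rw [show (2 : ℝ) * γ - 1 = 2 * g by rw [hgdef]; ring] at h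
      field_simp
      nlinarith [h]
    rw [hL]; ring
  · intro h
    have hL : Real.log ((1 + 2 * r) / (1 - 2 * r)) = β * (-(t / g)) * r := by
      rw [← h]; ring
    rw [hL, show (2 * γ - 1 : ℝ) = 2 * g by rw [hgdef]; ring]
    field_simp
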